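/- With u a g-unit vector, cos φ = g(u,qu), sin φ = √(1−cos²φ) > 0, and w = (1/sin φ)(−cos φ · u + qu), the associated form f satisfies: f(u,u) = 2cos φ, f(w,w) = −2cos²φ/(1+cos φ), and f(u,w) = (1 + cos φ − 2cos²φ)/sin φ. -/

import Mathlib

/-- The cyclic permutation of coordinates on ℝ³. -/
noncomputable def Q : (Fin 3 → ℝ) → (Fin 3 → ℝ) :=
  fun u => (!![(0:ℝ),1,0; 0,0,1; 1,0,0]).mulVec u

theorem f_on_u_w (g : LinearMap.BilinForm ℝ (Fin 3 → ℝ))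
    (hsymm : ∀ u v, g u v = g v u)
    (hpos : ∀ u, u ≠ 0 → 0 < g u u)
    (hinv : ∀ u v, g (Q u) (Q v) = g u v)
    (f : (Fin 3 → ℝ) → (Fin 3 → ℝ) → ℝ)
    (hf : ∀ u v, f u v = g u (Q v) + g (Q u) v)
    (u : Fin 3 → ℝ) (hu : g u u = 1)
    (φ : ℝ) (hφ : φ ∈ Set.Ioo 0 (2 * Real.pi / 3))
    (hcos : g u (Q u) = Real.cos φ)
    (hsin : Real.sin φ = Real.sqrt (1 - Real.cos φ ^ 2))
    (w : Fin 3 → ℝ)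
    (hw : w = (1 / Real.sin φ) • (-(Real.cos φ) • u + Q u)) :
    f u u = 2 * Real.cos φ ∧
    f w w = -(2 * Real.cos φ ^ 2) / (1 + Real.cos φ) ∧
    f u w = (1 + Real.cos φ - 2 * Real.cos φ ^ 2) / Real.sin φ := by
  have pi := Real.pi_pos
  obtain ⟨hφ1, hφ2⟩ := hφ
  set c := Real.cos φ with hc
  set s := Real.sin φ with hsdef
  have hs : 0 < s := Real.sin_pos_of_pos_of_lt_pi hφ1 (by linarith)
  have hs2 : s ^ 2 = 1 - c ^ 2 := by
    have := Real.sin_sq_add_cos_sq φ; rw [← hc, ← hsdef] at this; linarith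
  have hc1 : c < 1 := by nlinarith
  have hcm1 : -1 < c := by nlinarith
  have Q3 : ∀ v : Fin 3 → ℝ, Q (Q (Q v)) = v := by
    intro v
    funext i
    fin_cases i <;>
      simp [Q, Matrix.mulVec, dotProduct, Fin.sum_univ_succ]
  have QL : ∀ (a : ℝ) (x y : Fin 3 → ℝ), Q (a • x + y) = a • Q x + Q y := by
    intro a x y; simp [Q, Matrix.mulVec_add, Matrix.mulVec_smul]
  have QS : ∀ (a : ℝ) (x : Fin 3 → ℝ), Q (a • x) = a • Q x := by
    intro a x; simp [Q, Matrix.mulVec_smul]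
  have h1 : g (Q u) (Q u) = 1 := by rw [hinv]; exact hu
  have h2 : g (Q u) u = c := by rw [hsymm]; exact hcos
  have h4 : g (Q u) (Q (Q u)) = c := by rw [hinv]; exact hcos
  have h3 : g u (Q (Q u)) = c := by
    have h := hinv (Q u) (Q (Q u))
    rw [Q3] at h
    rw [hsymm, h]; exact h4
  have h3' : g (Q (Q u)) u = c := by rw [hsymm]; exact h3
  have h4' : g (Q (Q u)) (Q u) = c := by rw [hsymm]; exact h4
  have hQw : Q w = (1 / s) • (-c • Q u + Q (Q u)) := by
    rw [hw, QS, QL]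
  refine ⟨?_, ?_, ?_⟩
  · rw [hf, hcos, h2]; ring
  · rw [hf, hQw, hw]
    simp only [map_add, map_smul, map_neg, LinearMap.add_apply, LinearMap.smul_apply,
      LinearMap.neg_apply, smul_eq_mul, h1, h2, h3, h4, h3', h4', hcos, hu]
    have h1c : (1 : ℝ) + c ≠ 0 := by linarith
    field_simp
    linear_combination (2*c^2) * hs2
  · rw [hf, hQw, hw]
    simp only [map_add, map_smul, map_neg, LinearMap.add_apply, LinearMap.smul_apply,
      LinearMap.neg_apply, smul_eq_mul, h1, h2, h3, h4, h3', h4', hcos, hu]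
    field_simp
    ring
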